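/- Let M be a point-line configuration on [d] and let x₁,…,x_n be 3-element subsets of [d], none of which is dependent in M, such that x_{i+1} is a circuit of M^{x_i} for each i (indices mod n), and no 3-set y outside {x₁,…,x_n} is a circuit of M^{x_n} other than the circuits of M. Then M^{x₁} = ⋯ = M^{x_n}, the 3-circuits of M^{x_n} are exactly C₃(M) ∪ {x₁,…,x_n}, and M^{x_n} is a minimal matroid strictly above M in the dependency order among simple rank-3 matroids (loopless, no parallel pairs). -/

import Mathlib

open Finset

variable {d : ℕ}

/-- A point-line configuration on `[d]`: lines of size ≥ 3 meeting pairwise in ≤ 1 point. -/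
def IsPLC (L : Finset (Finset (Fin d))) : Prop :=
  (∀ l ∈ L, 3 ≤ l.card) ∧ ∀ l ∈ L, ∀ l' ∈ L, l ≠ l' → (l ∩ l').card ≤ 1

/-- `N` covers `Δ`: every member of `Δ` is contained in a line of `N`. -/
def Covers (Δ N : Finset (Finset (Fin d))) : Prop :=
  ∀ e ∈ Δ, ∃ l ∈ N, e ⊆ l

/-- `N` is the minimal point-line configuration covering `Δ` (this is `M^x` when
`Δ = ℒ ∪ {x}`). -/
def IsMinCover (Δ N : Finset (Finset (Fin d))) : Prop :=
  IsPLC N ∧ Covers Δ N ∧ ∀ N', IsPLC N' → Covers Δ N' → Covers N N'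

/-- Dependency order between point-line configurations: every dependent 3-set of
the first is dependent in the second. -/
def plcDepLE (L₁ L₂ : Finset (Finset (Fin d))) : Prop :=
  ∀ S : Finset (Fin d), S.card = 3 → (∃ l ∈ L₁, S ⊆ l) → ∃ l ∈ L₂, S ⊆ l

def plcDepLT (L₁ L₂ : Finset (Finset (Fin d))) : Prop :=
  plcDepLE L₁ L₂ ∧ ¬ plcDepLE L₂ L₁

lemma covers_trans {A B C : Finset (Finset (Fin d))} (h1 : Covers A B) (h2 : Covers B C) :
    Covers A C := by
  intro e he
  obtain ⟨l, hl, hel⟩ := h1 e he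
  obtain ⟨l', hl', hll'⟩ := h2 l hl
  exact ⟨l', hl', hel.trans hll'⟩

lemma plc_eq_of_subset {A : Finset (Finset (Fin d))} (hA : IsPLC A)
    {l l' : Finset (Fin d)} (hl : l ∈ A) (hl' : l' ∈ A) (h : l ⊆ l') : l = l' := by
  by_contra hne
  have h1 := hA.2 l hl l' hl' hne
  have h2 : l ∩ l' = l := inter_eq_left.mpr h
  have h3 := hA.1 l hl
  rw [h2] at h1
  omega

lemma covers_antisymm {A B : Finset (Finset (Fin d))} (hA : IsPLC A) (hB : IsPLC B)
    (h1 : Covers A B) (h2 : Covers B A) : A = B := by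
  have key : ∀ (A B : Finset (Finset (Fin d))), IsPLC A → IsPLC B →
      Covers A B → Covers B A → A ⊆ B := by
    intro A B hA hB h1 h2 l hl
    obtain ⟨l', hl', h⟩ := h1 l hl
    obtain ⟨l'', hl'', h'⟩ := h2 l' hl'
    have e1 : l = l'' := plc_eq_of_subset hA hl hl'' (h.trans h')
    have e2 : l' = l := Finset.Subset.antisymm (e1 ▸ h') h
    exact e2 ▸ hl'
  exact Finset.Subset.antisymm (key A B hA hB h1 h2) (key B A hB hA h2 h1)

lemma le_covers {A B : Finset (Finset (Fin d))} (hA : ∀ l ∈ A, 3 ≤ l.card)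
    (hB : IsPLC B) (h : plcDepLE A B) : Covers A B := by
  intro l hl
  obtain ⟨t, htl, ht3⟩ := Finset.exists_subset_card_eq (hA l hl)
  obtain ⟨m, hm, htm⟩ := h t ht3 ⟨l, hl, htl⟩
  refine ⟨m, hm, fun p hp => ?_⟩
  by_cases hpt : p ∈ t
  · exact htm hpt
  obtain ⟨a, b, c, hab, hac, hbc, rfl⟩ := Finset.card_eq_three.mp ht3
  have hpa : p ≠ a := fun h => hpt (by simp [h])
  have hpb : p ≠ b := fun h => hpt (by simp [h])
  have hcard : ({a, b, p} : Finset (Fin d)).card = 3 := by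
    rw [card_insert_of_notMem (by simp [hab, hpa.symm]),
      card_insert_of_notMem (by simp [hpb.symm]), card_singleton]
  have hsub : ({a, b, p} : Finset (Fin d)) ⊆ l := by
    intro q hq
    simp only [mem_insert, mem_singleton] at hq
    rcases hq with rfl | rfl | rfl
    · exact htl (by simp)
    · exact htl (by simp)
    · exact hp
  obtain ⟨m', hm', hsm'⟩ := h _ hcard ⟨l, hl, hsub⟩
  have hmm' : m = m' := by
    by_contra hne
    have hint := hB.2 m hm m' hm' hne
    have hsub2 : ({a, b} : Finset (Fin d)) ⊆ m ∩ m' := by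
      intro q hq
      simp only [mem_insert, mem_singleton] at hq
      rcases hq with rfl | rfl
      · exact mem_inter.mpr ⟨htm (by simp), hsm' (by simp)⟩
      · exact mem_inter.mpr ⟨htm (by simp), hsm' (by simp)⟩
    have h2 : ({a, b} : Finset (Fin d)).card ≤ 1 :=
      le_trans (card_le_card hsub2) hint
    rw [card_insert_of_notMem (by simp [hab]), card_singleton] at h2
    omega
  rw [hmm']
  exact hsm' (by simp)

theorem stmt15 (L : Finset (Finset (Fin d))) (hL : IsPLC L) (n : ℕ)
    (x : Fin (n + 1) → Finset (Fin d)) (hcard : ∀ i, (x i).card = 3)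
    (hnotdep : ∀ i, ∀ l ∈ L, ¬ x i ⊆ l)
    (N : Fin (n + 1) → Finset (Finset (Fin d)))
    (hN : ∀ i, IsMinCover (insert (x i) L) (N i))
    -- `x_{i+1}` is a circuit of `M^{x_i}` for each `i` (indices mod `n+1`)
    (hcyc : ∀ i : Fin (n + 1), ∃ l ∈ N i, x (i + 1) ⊆ l)
    -- no 3-set outside `{x₁, …, x_n}` is a circuit of `M^{x_n}` beyond those of `M`
    (hno : ∀ y : Finset (Fin d), y.card = 3 → (∀ i, y ≠ x i) →
      (∃ l ∈ N (Fin.last n), y ⊆ l) → ∃ l ∈ L, y ⊆ l) :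
    -- then `M^{x₁} = ⋯ = M^{x_n}`,
    (∀ i j, N i = N j) ∧
    -- the 3-circuits of `M^{x_n}` are exactly `C₃(M) ∪ {x₁, …, x_n}`,
    (∀ y : Finset (Fin d), y.card = 3 →
      ((∃ l ∈ N (Fin.last n), y ⊆ l) ↔ ((∃ l ∈ L, y ⊆ l) ∨ ∃ i, y = x i))) ∧
    -- and `M^{x_n}` is minimal strictly above `M` among simple rank-3 matroids:
    plcDepLT L (N (Fin.last n)) ∧
    (∀ L' : Finset (Finset (Fin d)), IsPLC L' → plcDepLT L L' →
      plcDepLE L' (N (Fin.last n)) → plcDepLE (N (Fin.last n)) L') := by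
  have hcovL : ∀ i, Covers L (N i) := fun i e he => (hN i).2.1 e (mem_insert_of_mem he)
  have hxi : ∀ i, ∃ l ∈ N i, x i ⊆ l := fun i => (hN i).2.1 (x i) (mem_insert_self _ _)
  have step : ∀ i : Fin (n + 1), Covers (N (i + 1)) (N i) := by
    intro i
    apply (hN (i + 1)).2.2 (N i) (hN i).1
    intro e he
    rcases mem_insert.mp he with rfl | heL
    · exact hcyc i
    · exact hcovL i e heL
  open Fin.NatCast in
  have chain : ∀ k : ℕ, ∀ i : Fin (n + 1), Covers (N (i + (k : Fin (n + 1)))) (N i) := by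
    intro k
    induction k with
    | zero =>
      intro i
      simp only [Nat.cast_zero, add_zero]
      exact fun e he => ⟨e, he, subset_rfl⟩
    | succ k ih =>
      intro i
      have hcast : ((k + 1 : ℕ) : Fin (n + 1)) = (k : Fin (n + 1)) + 1 := by push_cast; ring
      rw [hcast, ← add_assoc]
      exact covers_trans (step (i + (k : Fin (n + 1)))) (ih i)
  open Fin.NatCast in
  have covAll : ∀ i j : Fin (n + 1), Covers (N j) (N i) := by
    intro i j
    have h := chain (j - i).val i
    have he : i + (((j - i).val : ℕ) : Fin (n + 1)) = j := by
      rw [Fin.cast_val_eq_self]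
      exact add_sub_cancel i j
    rwa [he] at h
  have heq : ∀ i j, N i = N j := fun i j =>
    covers_antisymm (hN i).1 (hN j).1 (covAll j i) (covAll i j)
  have char : ∀ y : Finset (Fin d), y.card = 3 →
      ((∃ l ∈ N (Fin.last n), y ⊆ l) ↔ ((∃ l ∈ L, y ⊆ l) ∨ ∃ i, y = x i)) := by
    intro y hy
    constructor
    · intro h
      by_cases hx : ∃ i, y = x i
      · exact Or.inr hx
      · push_neg at hx
        exact Or.inl (hno y hy hx h)
    · rintro (⟨l, hl, hyl⟩ | ⟨i, rfl⟩)
      · obtain ⟨m, hm, hlm⟩ := hcovL (Fin.last n) l hl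
        exact ⟨m, hm, hyl.trans hlm⟩
      · rw [heq (Fin.last n) i]
        exact hxi i
  refine ⟨heq, char, ⟨?_, ?_⟩, ?_⟩
  · intro S hS hSL
    obtain ⟨l, hl, hSl⟩ := hSL
    obtain ⟨m, hm, hlm⟩ := hcovL (Fin.last n) l hl
    exact ⟨m, hm, hSl.trans hlm⟩
  · intro h
    obtain ⟨l, hl, hxl⟩ := h (x (Fin.last n)) (hcard _) (hxi (Fin.last n))
    exact hnotdep (Fin.last n) l hl hxl
  · intro L' hL' hLT hle'
    obtain ⟨hle, hnle⟩ := hLT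
    unfold plcDepLE at hnle
    push_neg at hnle
    obtain ⟨S, hS3, hSL', hSnotL⟩ := hnle
    have hSN := hle' S hS3 hSL'
    rcases (char S hS3).mp hSN with h | ⟨i, rfl⟩
    · obtain ⟨l, hl, hSl⟩ := h
      exact absurd hSl (hSnotL l hl)
    · have hcov : Covers (insert (x i) L) L' := by
        intro e he
        rcases mem_insert.mp he with rfl | heL
        · exact hSL'
        · exact le_covers hL.1 hL' hle e heL
      have hcN := (hN i).2.2 L' hL' hcov
      intro S' hS' hS'N
      rw [heq (Fin.last n) i] at hS'N
      obtain ⟨l, hl, hS'l⟩ := hS'N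
      obtain ⟨m, hm, hlm⟩ := hcN l hl
      exact ⟨m, hm, hS'l.trans hlm⟩
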